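/- Let β > 0 and K(η) = e^{η²/4}. If φ : (0,∞) → ℝ is measurable with ∫₀^∞ (φ(η)² + φ'(η)²) K(η)^β dη < ∞ (φ' the distributional derivative), then the function η ↦ K(η)^{β/2} φ(η) has a representative which is Hölder continuous of exponent 1/2 on [0,∞). -/

import Mathlib

open MeasureTheory Real Set

set_option maxHeartbeats 1000000

noncomputable def Kw (η : ℝ) : ℝ := Real.exp (η ^ 2 / 4)

lemma Kw_rpow (γ t : ℝ) : Kw t ^ γ = Real.exp (γ * t ^ 2 / 4) := by
  rw [Kw, Real.rpow_def_of_pos (Real.exp_pos _), Real.log_exp]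
  ring_nf

lemma Kw_rpow_pos (γ t : ℝ) : 0 < Kw t ^ γ := by rw [Kw_rpow]; exact Real.exp_pos _

lemma one_le_Kw_rpow {γ : ℝ} (hγ : 0 ≤ γ) (t : ℝ) : 1 ≤ Kw t ^ γ := by
  rw [Kw_rpow]
  apply Real.one_le_exp
  positivity

lemma Kw_rpow_mono {γ x y : ℝ} (hγ : 0 ≤ γ) (h0 : 0 ≤ x) (hxy : x ≤ y) :
    Kw x ^ γ ≤ Kw y ^ γ := by
  rw [Kw_rpow, Kw_rpow]
  apply Real.exp_le_exp.mpr
  have : x ^ 2 ≤ y ^ 2 := by nlinarith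
  nlinarith

lemma hasDerivAt_Kw (γ t : ℝ) :
    HasDerivAt (fun s => Kw s ^ γ) (γ * t / 2 * Kw t ^ γ) t := by
  have h1 : HasDerivAt (fun s : ℝ => γ * s ^ 2 / 4) (γ * (2 * t) / 4) t := by
    simpa using ((hasDerivAt_pow 2 t).const_mul γ).div_const 4
  have h2 := h1.exp
  have heq : (fun s => Kw s ^ γ) = fun s => Real.exp (γ * s ^ 2 / 4) := by
    funext s; exact Kw_rpow γ s
  rw [heq]
  convert h2 using 1
  rw [← Kw_rpow]
  ring

lemma continuous_Kw_rpow (γ : ℝ) : Continuous (fun s => Kw s ^ γ) :=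
  (hasDerivAt_Kw γ · |>.continuousAt) |> continuous_iff_continuousAt.mpr

lemma integral_le_sqrt_mul_sqrt {x y : ℝ} (hxy : x ≤ y) (g : ℝ → ℝ)
    (hg0 : ∀ t ∈ Ioc x y, 0 ≤ g t) (hg2 : IntegrableOn (fun t => g t ^ 2) (Ioc x y))
    (hgm : AEStronglyMeasurable g (volume.restrict (Ioc x y))) :
    ∫ t in Ioc x y, g t ≤ Real.sqrt (y - x) * Real.sqrt (∫ t in Ioc x y, g t ^ 2) := by
  have hfin : volume (Ioc x y) < ⊤ := by
    rw [Real.volume_Ioc]; exact ENNReal.ofReal_lt_top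
  have hvol : (volume (Ioc x y)).toReal = y - x := by
    rw [Real.volume_Ioc, ENNReal.toReal_ofReal (by linarith)]
  set S : ℝ := ∫ t in Ioc x y, g t ^ 2 with hS
  have hS0 : 0 ≤ S := setIntegral_nonneg measurableSet_Ioc (fun t _ => by positivity)
  have hconst : ∀ c : ℝ, IntegrableOn (fun _ : ℝ => c) (Ioc x y) :=
    fun c => integrableOn_const hfin.ne
  have hkey : ∀ lam : ℝ, 0 < lam →
      ∫ t in Ioc x y, g t ≤ S / (2 * lam) + lam * (y - x) / 2 := by
    intro lam hlam
    have hpt : ∀ t ∈ Ioc x y, g t ≤ g t ^ 2 / (2 * lam) + lam / 2 := by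
      intro t _
      have h := sq_nonneg (g t - lam)
      rw [div_add_div _ _ (by positivity) (by norm_num), le_div_iff₀ (by positivity)]
      nlinarith
    have hint : IntegrableOn (fun t => g t ^ 2 / (2 * lam) + lam / 2) (Ioc x y) :=
      (hg2.div_const _).add (hconst _)
    have hgint : IntegrableOn g (Ioc x y) := by
      apply Integrable.mono' (hint.const_mul 2) hgm
      filter_upwards [ae_restrict_mem measurableSet_Ioc] with t ht
      rw [Real.norm_eq_abs, abs_of_nonneg (hg0 t ht)]
      calc g t ≤ g t ^ 2 / (2 * lam) + lam / 2 := hpt t ht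
      _ ≤ 2 * (g t ^ 2 / (2 * lam) + lam / 2) := by
          have h1 : 0 ≤ g t ^ 2 / (2 * lam) + lam / 2 := by positivity
          linarith
    calc ∫ t in Ioc x y, g t ≤ ∫ t in Ioc x y, (g t ^ 2 / (2 * lam) + lam / 2) :=
          setIntegral_mono_on hgint hint measurableSet_Ioc hpt
    _ = S / (2 * lam) + lam * (y - x) / 2 := by
        rw [integral_add (hg2.div_const _) (hconst _), integral_div, setIntegral_const,
          smul_eq_mul, measureReal_def, hvol]
        ring
  rcases eq_or_lt_of_le hxy with rfl | hlt
  · simp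
  rcases eq_or_lt_of_le hS0 with hSz | hSpos
  · refine le_of_forall_pos_le_add ?_
    intro ε hε
    have hyx : 0 < y - x := by linarith
    have hlam : 0 < ε / (y - x) := div_pos hε hyx
    have h1 := hkey (ε / (y - x)) hlam
    have h2 : S / (2 * (ε / (y - x))) + ε / (y - x) * (y - x) / 2 = ε / 2 := by
      rw [← hSz]
      field_simp; ring
    have h3 : 0 ≤ Real.sqrt (y - x) * Real.sqrt S := by positivity
    rw [h2] at h1
    linarith
  · set a : ℝ := Real.sqrt S with ha
    set b : ℝ := Real.sqrt (y - x) with hb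
    have ha2 : a ^ 2 = S := Real.sq_sqrt hS0
    have hb2 : b ^ 2 = y - x := Real.sq_sqrt (by linarith)
    have hap : 0 < a := Real.sqrt_pos.mpr hSpos
    have hbp : 0 < b := Real.sqrt_pos.mpr (by linarith)
    have := hkey (a / b) (by positivity)
    calc ∫ t in Ioc x y, g t ≤ S / (2 * (a / b)) + (a / b) * (y - x) / 2 := this
    _ = b * a := by rw [← ha2, ← hb2]; field_simp; ring

lemma telescope_bound {a b : ℝ} (hab : a ≤ b) (u v r m : ℝ → ℝ)
    (hv : IntervalIntegrable v volume a b) (hr : IntervalIntegrable r volume a b)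
    (hm : IntervalIntegrable m volume a b)
    (hmC : 0 ≤ ∫ t in a..b, m t)
    (hloc : ∀ ε : ℝ, 0 < ε → ∃ δ : ℝ, 0 < δ ∧ ∀ x y : ℝ, a ≤ x → x ≤ y → y ≤ b → y - x ≤ δ →
      |u y - u x - ∫ t in x..y, v t| ≤ (∫ t in x..y, r t) + ε * (∫ t in x..y, m t) + ε * (y - x)) :
    |u b - u a - ∫ t in a..b, v t| ≤ ∫ t in a..b, r t := by
  set C : ℝ := (∫ t in a..b, m t) + (b - a) with hC
  have hC0 : 0 ≤ C := by
    have : 0 ≤ b - a := by linarith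
    simp only [hC]; linarith
  refine le_of_forall_pos_le_add ?_
  intro ε' hε'
  set ε : ℝ := ε' / (C + 1) with hεdef
  have hε : 0 < ε := div_pos hε' (by linarith)
  obtain ⟨δ, hδ, hδloc⟩ := hloc ε hε
  obtain ⟨N, hN⟩ := exists_nat_ge ((b - a) / δ)
  set n : ℕ := N + 1 with hn
  have hnpos : (0:ℝ) < n := by positivity
  set Δ : ℝ := (b - a) / n with hΔ
  have hΔ0 : 0 ≤ Δ := div_nonneg (by linarith) hnpos.le
  have hΔδ : Δ ≤ δ := by
    rw [hΔ, div_le_iff₀ hnpos]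
    have h1 : (b - a) / δ ≤ (N:ℝ) := hN
    have h2 : (N:ℝ) ≤ (n:ℝ) := by simp [hn]
    calc b - a = ((b - a)/δ) * δ := by field_simp
    _ ≤ (n:ℝ) * δ := by
        apply mul_le_mul_of_nonneg_right _ hδ.le
        linarith
    _ = δ * n := by ring
  set t : ℕ → ℝ := fun i => a + i * Δ with ht
  have htmono : ∀ i : ℕ, t i ≤ t (i+1) := by
    intro i
    simp only [ht]
    push_cast
    nlinarith
  have htb : ∀ i : ℕ, i ≤ n → t i ≤ b := by
    intro i hi
    have : (i:ℝ) ≤ (n:ℝ) := by exact_mod_cast hi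
    have h2 : (i:ℝ) * Δ ≤ (n:ℝ) * Δ := mul_le_mul_of_nonneg_right this hΔ0
    have h3 : (n:ℝ) * Δ = b - a := by
      rw [hΔ]; field_simp
    simp only [ht]; linarith
  have hta : ∀ i : ℕ, a ≤ t i := by
    intro i
    simp only [ht]
    nlinarith [Nat.cast_nonneg (α := ℝ) i]
  have htn : t n = b := by
    simp only [ht, hΔ]; field_simp; ring
  have ht0 : t 0 = a := by simp [ht]
  -- interval integrability on pieces
  have hsub : ∀ i : ℕ, i < n → ∀ f : ℝ → ℝ, IntervalIntegrable f volume a b →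
      IntervalIntegrable f volume (t i) (t (i+1)) := by
    intro i hi f hf
    apply hf.mono_set
    rw [uIcc_of_le (htmono i), uIcc_of_le hab]
    exact Icc_subset_Icc (hta i) (htb (i+1) hi)
  have hsum : ∀ f : ℝ → ℝ, IntervalIntegrable f volume a b →
      ∑ i ∈ Finset.range n, (∫ x in t i..t (i+1), f x) = ∫ x in a..b, f x := by
    intro f hf
    have := intervalIntegral.sum_integral_adjacent_intervals (a := t) (n := n)
      (f := f) (μ := volume) (fun k hk => hsub k hk f hf)
    rw [this, ht0, htn]
  have key : |u b - u a - ∫ x in a..b, v x| ≤ (∫ x in a..b, r x) + ε * C := by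
    have husum : u b - u a = ∑ i ∈ Finset.range n, (u (t (i+1)) - u (t i)) := by
      rw [Finset.sum_range_sub (f := fun i => u (t i)), ht0, htn]
    rw [husum, ← hsum v hv]
    rw [← Finset.sum_sub_distrib]
    refine (Finset.abs_sum_le_sum_abs _ _).trans ?_
    have hbound : ∀ i ∈ Finset.range n,
        |u (t (i+1)) - u (t i) - ∫ x in t i..t (i+1), v x|
          ≤ (∫ x in t i..t (i+1), r x) + ε * (∫ x in t i..t (i+1), m x) + ε * Δ := by
      intro i hi
      rw [Finset.mem_range] at hi
      have hd : t (i+1) - t i = Δ := by simp only [ht]; push_cast; ring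
      have := hδloc (t i) (t (i+1)) (hta i) (htmono i) (htb (i+1) hi) (by rw [hd]; exact hΔδ)
      rwa [hd] at this
    refine (Finset.sum_le_sum hbound).trans ?_
    rw [Finset.sum_add_distrib, Finset.sum_add_distrib, ← Finset.mul_sum,
      hsum r hr, hsum m hm, Finset.sum_const, Finset.card_range, nsmul_eq_mul]
    have : (n:ℝ) * (ε * Δ) = ε * (b - a) := by
      rw [hΔ]; field_simp
    rw [this, hC]; apply le_of_eq; ring
  refine key.trans ?_
  have : ε * C ≤ ε' := by
    rw [hεdef, div_mul_eq_mul_div, div_le_iff₀ (by linarith : (0:ℝ) < C + 1)]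
    nlinarith
  linarith

lemma norm_phi'_le (β : ℝ) (hβ : 0 < β) (φ φ' : ℝ → ℝ) (t : ℝ) :
    ‖φ' t‖ ≤ (1 + ((φ t) ^ 2 + (φ' t) ^ 2) * Kw t ^ β) / 2 := by
  have h1 : (1:ℝ) ≤ Kw t ^ β := one_le_Kw_rpow hβ.le t
  have h2 : (φ t) ^ 2 + (φ' t) ^ 2 ≤ ((φ t) ^ 2 + (φ' t) ^ 2) * Kw t ^ β := by
    nlinarith [sq_nonneg (φ t), sq_nonneg (φ' t)]
  have h3 : ‖φ' t‖ = |φ' t| := rfl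
  rw [h3]
  nlinarith [sq_nonneg (|φ' t| - 1), abs_nonneg (φ' t), sq_abs (φ' t)]

lemma hfun_intOn (β : ℝ) (φ φ' : ℝ → ℝ)
    (hInt : Integrable (fun η => ((φ η) ^ 2 + (φ' η) ^ 2) * (Kw η) ^ β)
      (volume.restrict (Ioi (0:ℝ)))) {s : Set ℝ} (hs : s ⊆ Ioi 0) (hms : MeasurableSet s) :
    IntegrableOn (fun η => ((φ η) ^ 2 + (φ' η) ^ 2) * (Kw η) ^ β) s := by
  exact (IntegrableOn.mono hInt hs le_rfl)

lemma phi'_intOn (β : ℝ) (hβ : 0 < β) (φ φ' : ℝ → ℝ)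
    (hInt : Integrable (fun η => ((φ η) ^ 2 + (φ' η) ^ 2) * (Kw η) ^ β)
      (volume.restrict (Ioi (0:ℝ))))
    {x y : ℝ} (hx : 0 < x) (hxy : x ≤ y)
    (hmeas : AEStronglyMeasurable φ' (volume.restrict (Ioc x y))) :
    IntegrableOn φ' (Ioc x y) := by
  have hsub : Ioc x y ⊆ Ioi 0 := fun s hs => lt_of_lt_of_le hx hs.1.le
  have hh : IntegrableOn (fun η => ((φ η) ^ 2 + (φ' η) ^ 2) * (Kw η) ^ β) (Ioc x y) :=
    hfun_intOn β φ φ' hInt hsub measurableSet_Ioc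
  have hfin : volume (Ioc x y) < ⊤ := by
    rw [Real.volume_Ioc]; exact ENNReal.ofReal_lt_top
  have hcint : IntegrableOn (fun _ : ℝ => (1:ℝ)) (Ioc x y) :=
    integrableOn_const hfin.ne
  exact Integrable.mono' ((hcint.add hh).div_const 2) hmeas
    (ae_of_all _ (fun t => norm_phi'_le β hβ φ φ' t))

lemma phi_cont (β : ℝ) (hβ : 0 < β) (φ φ' : ℝ → ℝ)
    (hAC : ∀ x y : ℝ, 0 < x → 0 < y → φ y = φ x + ∫ t in x..y, φ' t)
    (hInt : Integrable (fun η => ((φ η) ^ 2 + (φ' η) ^ 2) * (Kw η) ^ β)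
      (volume.restrict (Ioi (0:ℝ)))) :
    ContinuousOn φ (Ioi 0) := by
  intro t ht
  rw [mem_Ioi] at ht
  apply ContinuousAt.continuousWithinAt
  have hright : ContinuousWithinAt φ (Ici t) t := by
    by_cases hM : ∃ δ : ℝ, 0 < δ ∧ AEStronglyMeasurable φ' (volume.restrict (Ioc t (t + δ)))
    · obtain ⟨δ, hδ, hmeas⟩ := hM
      have hint : IntegrableOn φ' (Ioc t (t + δ)) :=
        phi'_intOn β hβ φ φ' hInt ht (by linarith) hmeas
      have hicc : IntegrableOn φ' (uIcc t (t + δ)) := by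
        rw [uIcc_of_le (by linarith)]
        rw [integrableOn_Icc_iff_integrableOn_Ioc]
        exact hint
      have hprim : ContinuousOn (fun y => φ t + ∫ s in t..y, φ' s) (uIcc t (t + δ)) :=
        continuousOn_const.add (intervalIntegral.continuousOn_primitive_interval hicc)
      have heq : EqOn φ (fun y => φ t + ∫ s in t..y, φ' s) (uIcc t (t + δ)) := by
        intro y hy
        rw [uIcc_of_le (by linarith)] at hy
        exact hAC t y ht (lt_of_lt_of_le ht hy.1)
      have hφc : ContinuousOn φ (uIcc t (t + δ)) := hprim.congr heq
      have h1 : ContinuousWithinAt φ (uIcc t (t + δ)) t :=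
        hφc t (by rw [uIcc_of_le (by linarith)]; exact ⟨le_rfl, by linarith⟩)
      apply h1.mono_of_mem_nhdsWithin
      rw [uIcc_of_le (by linarith), ← Ici_inter_Iic, inter_comm]
      exact Filter.inter_mem (mem_nhdsWithin_of_mem_nhds (Iic_mem_nhds (by linarith)))
        self_mem_nhdsWithin
    · push_neg at hM
      have hconst : ∀ y, t ≤ y → φ y = φ t := by
        intro y hy
        rcases eq_or_lt_of_le hy with rfl | hlt
        · rfl
        · have hnm := hM (y - t) (by linarith)
          rw [show t + (y - t) = y by ring] at hnm
          have hz : ∫ s in t..y, φ' s = 0 := by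
            rw [intervalIntegral.integral_of_le hy]
            exact integral_non_aestronglyMeasurable hnm
          rw [hAC t y ht (by linarith), hz, add_zero]
      exact (continuousWithinAt_const (b := φ t)).congr (fun y hy => hconst y hy) (hconst t le_rfl)
  have hleft : ContinuousWithinAt φ (Iic t) t := by
    by_cases hM : ∃ δ : ℝ, 0 < δ ∧ δ < t ∧ AEStronglyMeasurable φ' (volume.restrict (Ioc (t - δ) t))
    · obtain ⟨δ, hδ0, hδt, hmeas⟩ := hM
      have ha : (0:ℝ) < t - δ := by linarith
      have hint : IntegrableOn φ' (Ioc (t - δ) t) :=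
        phi'_intOn β hβ φ φ' hInt ha (by linarith) hmeas
      have hicc : IntegrableOn φ' (uIcc (t - δ) t) := by
        rw [uIcc_of_le (by linarith), integrableOn_Icc_iff_integrableOn_Ioc]
        exact hint
      have hprim : ContinuousOn (fun y => φ (t - δ) + ∫ s in (t - δ)..y, φ' s)
          (uIcc (t - δ) t) :=
        continuousOn_const.add (intervalIntegral.continuousOn_primitive_interval hicc)
      have heq : EqOn φ (fun y => φ (t - δ) + ∫ s in (t - δ)..y, φ' s) (uIcc (t - δ) t) := by
        intro y hy
        rw [uIcc_of_le (by linarith)] at hy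
        exact hAC (t - δ) y ha (lt_of_lt_of_le ha hy.1)
      have hφc : ContinuousOn φ (uIcc (t - δ) t) := hprim.congr heq
      have h1 : ContinuousWithinAt φ (uIcc (t - δ) t) t :=
        hφc t (by rw [uIcc_of_le (by linarith)]; exact ⟨by linarith, le_rfl⟩)
      apply h1.mono_of_mem_nhdsWithin
      rw [uIcc_of_le (by linarith), ← Ici_inter_Iic]
      exact Filter.inter_mem (mem_nhdsWithin_of_mem_nhds (Ici_mem_nhds (by linarith)))
        self_mem_nhdsWithin
    · push_neg at hM
      have hconst : ∀ y, t / 2 < y → y ≤ t → φ y = φ t := by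
        intro y hy1 hy2
        rcases eq_or_lt_of_le hy2 with rfl | hlt
        · rfl
        · have hnm := hM (t - y) (by linarith) (by linarith)
          rw [show t - (t - y) = y by ring] at hnm
          have hz : ∫ s in y..t, φ' s = 0 := by
            rw [intervalIntegral.integral_of_le hy2]
            exact integral_non_aestronglyMeasurable hnm
          have := hAC y t (by linarith) ht
          rw [hz, add_zero] at this
          exact this.symm
      refine (continuousWithinAt_const (b := φ t)).congr_of_eventuallyEq ?_ rfl
      filter_upwards [mem_nhdsWithin_of_mem_nhds (Ioi_mem_nhds (by linarith : t / 2 < t)),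
        self_mem_nhdsWithin] with y h1 h2
      exact hconst y h1 h2
  have := hleft.union hright
  rw [Iic_union_Ici] at this
  exact continuousWithinAt_univ φ t |>.mp this

section
variable (β : ℝ) (φ φ' : ℝ → ℝ)

lemma absphi'_aesm (hβ : 0 < β)
    (hAC : ∀ x y : ℝ, 0 < x → 0 < y → φ y = φ x + ∫ t in x..y, φ' t)
    (hInt : Integrable (fun η => ((φ η) ^ 2 + (φ' η) ^ 2) * (Kw η) ^ β)
      (volume.restrict (Ioi (0:ℝ)))) :
    AEStronglyMeasurable (fun t => |φ' t|) (volume.restrict (Ioi (0:ℝ))) := by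
  have hφ : AEStronglyMeasurable φ (volume.restrict (Ioi (0:ℝ))) :=
    (phi_cont β hβ φ φ' hAC hInt).aestronglyMeasurable measurableSet_Ioi
  have hh := hInt.1
  have hKinv : Continuous (fun t : ℝ => (Kw t ^ β)⁻¹) :=
    (continuous_Kw_rpow β).inv₀ (fun t => (Kw_rpow_pos β t).ne')
  have heq : (fun t => |φ' t|) =
      fun t => Real.sqrt ((((φ t) ^ 2 + (φ' t) ^ 2) * (Kw t) ^ β) * (Kw t ^ β)⁻¹ - φ t * φ t) := by
    funext t
    rw [mul_inv_cancel_right₀ (Kw_rpow_pos β t).ne', show φ t * φ t = φ t ^ 2 by ring,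
      add_sub_cancel_left, Real.sqrt_sq_eq_abs]
  rw [heq]
  exact Real.continuous_sqrt.comp_aestronglyMeasurable
    ((hh.mul (hKinv.aestronglyMeasurable)).sub (hφ.mul hφ))

lemma aesm_sub {f : ℝ → ℝ} {s : Set ℝ} (hs : s ⊆ Ioi (0:ℝ))
    (h : AEStronglyMeasurable f (volume.restrict (Ioi (0:ℝ)))) :
    AEStronglyMeasurable f (volume.restrict s) :=
  h.mono_measure (Measure.restrict_mono hs le_rfl)

lemma absphi'_intOn (hβ : 0 < β)
    (hAC : ∀ x y : ℝ, 0 < x → 0 < y → φ y = φ x + ∫ t in x..y, φ' t)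
    (hInt : Integrable (fun η => ((φ η) ^ 2 + (φ' η) ^ 2) * (Kw η) ^ β)
      (volume.restrict (Ioi (0:ℝ))))
    {x y : ℝ} (hx : 0 ≤ x) :
    IntegrableOn (fun t => |φ' t|) (Ioc x y) := by
  have hsub : Ioc x y ⊆ Ioi 0 := fun s hs => lt_of_le_of_lt hx hs.1
  have hh : IntegrableOn (fun η => ((φ η) ^ 2 + (φ' η) ^ 2) * (Kw η) ^ β) (Ioc x y) :=
    IntegrableOn.mono_set hInt hsub
  have hfin : volume (Ioc x y) < ⊤ := by rw [Real.volume_Ioc]; exact ENNReal.ofReal_lt_top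
  have hcint : IntegrableOn (fun _ : ℝ => (1:ℝ)) (Ioc x y) :=
    integrableOn_const hfin.ne
  refine Integrable.mono' ((hcint.add hh).div_const 2)
    (aesm_sub hsub (absphi'_aesm β φ φ' hβ hAC hInt)) (ae_of_all _ (fun t => ?_))
  rw [Real.norm_eq_abs, abs_abs, ← Real.norm_eq_abs]
  exact norm_phi'_le β hβ φ φ' t

lemma mul_absphi'_intOn (hβ : 0 < β)
    (hAC : ∀ x y : ℝ, 0 < x → 0 < y → φ y = φ x + ∫ t in x..y, φ' t)
    (hInt : Integrable (fun η => ((φ η) ^ 2 + (φ' η) ^ 2) * (Kw η) ^ β)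
      (volume.restrict (Ioi (0:ℝ))))
    {x y : ℝ} (hx : 0 ≤ x) (c : ℝ → ℝ)
    (hc : AEStronglyMeasurable c (volume.restrict (Ioc x y)))
    (M : ℝ) (hM : ∀ t ∈ Ioc x y, |c t| ≤ M) :
    IntegrableOn (fun t => c t * |φ' t|) (Ioc x y) := by
  refine Integrable.mono' ((absphi'_intOn β φ φ' hβ hAC hInt hx).const_mul M)
    (hc.mul (aesm_sub (fun s hs => lt_of_le_of_lt hx hs.1)
      (absphi'_aesm β φ φ' hβ hAC hInt))) ?_
  filter_upwards [ae_restrict_mem measurableSet_Ioc] with t ht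
  rw [Real.norm_eq_abs, abs_mul, abs_abs]
  exact mul_le_mul_of_nonneg_right (hM t ht) (abs_nonneg _)

lemma holder_loc (hβ : 0 < β)
    (hAC : ∀ x y : ℝ, 0 < x → 0 < y → φ y = φ x + ∫ t in x..y, φ' t)
    (hInt : Integrable (fun η => ((φ η) ^ 2 + (φ' η) ^ 2) * (Kw η) ^ β)
      (volume.restrict (Ioi (0:ℝ))))
    {x y : ℝ} (hx : 0 < x) (hxy : x ≤ y) :
    |Kw y ^ (β/2) * φ y - Kw x ^ (β/2) * φ x| ≤
      ∫ t in Ioc x y, (Kw t ^ (β/2) * |φ' t| + β * t / 4 * Kw t ^ (β/2) * |φ t|) := by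
  have hφc : ContinuousOn φ (Ioi 0) := phi_cont β hβ φ φ' hAC hInt
  have hsubI : Icc x y ⊆ Ioi 0 := fun s hs => lt_of_lt_of_le hx hs.1
  have hφcxy : ContinuousOn φ (Icc x y) := hφc.mono hsubI
  have hq : Continuous (fun t : ℝ => β * t / 4 * Kw t ^ (β/2)) :=
    (((continuous_const.mul continuous_id).div_const 4).mul (continuous_Kw_rpow (β/2)))
  have hint1 : IntegrableOn (fun t => Kw t ^ (β/2) * |φ' t|) (Ioc x y) := by
    refine mul_absphi'_intOn β φ φ' hβ hAC hInt hx.le _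
      ((continuous_Kw_rpow (β/2)).aestronglyMeasurable) (Kw y ^ (β/2)) (fun t ht => ?_)
    rw [abs_of_pos (Kw_rpow_pos _ _)]
    exact Kw_rpow_mono (by positivity) (lt_of_lt_of_le hx ht.1.le).le ht.2
  have hint2 : IntegrableOn (fun t => β * t / 4 * Kw t ^ (β/2) * |φ t|) (Ioc x y) :=
    ((hq.continuousOn.mul hφcxy.abs).integrableOn_Icc).mono_set Ioc_subset_Icc_self
  have hr1I : IntervalIntegrable (fun t => Kw t ^ (β/2) * |φ' t|) volume x y :=
    (intervalIntegrable_iff_integrableOn_Ioc_of_le hxy).mpr hint1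
  have hr2I : IntervalIntegrable (fun t => β * t / 4 * Kw t ^ (β/2) * |φ t|) volume x y :=
    (intervalIntegrable_iff_integrableOn_Ioc_of_le hxy).mpr hint2
  have habsI : IntervalIntegrable (fun t => |φ' t|) volume x y :=
    (intervalIntegrable_iff_integrableOn_Ioc_of_le hxy).mpr
      (absphi'_intOn β φ φ' hβ hAC hInt hx.le)
  have main := telescope_bound hxy (fun s => Kw s ^ (β/2) * φ s) (fun _ => (0:ℝ))
      (fun t => Kw t ^ (β/2) * |φ' t| + β * t / 4 * Kw t ^ (β/2) * |φ t|)
      (fun t => β * t / 4 * Kw t ^ (β/2))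
      intervalIntegrable_const (hr1I.add hr2I) (hq.intervalIntegrable x y)
      (intervalIntegral.integral_nonneg hxy (fun t ht => by
        have h1 : 0 < t := lt_of_lt_of_le hx ht.1
        exact mul_nonneg (div_nonneg (mul_nonneg hβ.le h1.le) (by norm_num))
          (Kw_rpow_pos _ _).le)) ?_
  · rw [intervalIntegral.integral_zero, sub_zero, intervalIntegral.integral_of_le hxy] at main
    exact main
  · intro ε hε
    obtain ⟨δ₁, hδ₁, hδprop⟩ := (Metric.uniformContinuousOn_iff).mp
      (isCompact_Icc.uniformContinuousOn_of_continuous hφcxy) ε hε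
    refine ⟨δ₁ / 2, by positivity, ?_⟩
    intro x' y' hxx' hx'y' hy'y hmesh
    have hx'0 : 0 < x' := lt_of_lt_of_le hx hxx'
    have hy'0 : 0 < y' := lt_of_lt_of_le hx'0 hx'y'
    have hsub2 : uIcc x' y' ⊆ uIcc x y := by
      rw [uIcc_of_le hx'y', uIcc_of_le hxy]; exact Icc_subset_Icc hxx' hy'y
    have hIccsub : Icc x' y' ⊆ Icc x y := Icc_subset_Icc hxx' hy'y
    have hr1' : IntervalIntegrable (fun t => Kw t ^ (β/2) * |φ' t|) volume x' y' :=
      hr1I.mono_set hsub2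
    have hr2' : IntervalIntegrable (fun t => β * t / 4 * Kw t ^ (β/2) * |φ t|) volume x' y' :=
      hr2I.mono_set hsub2
    have habs' : IntervalIntegrable (fun t => |φ' t|) volume x' y' := habsI.mono_set hsub2
    simp only [intervalIntegral.integral_zero, sub_zero]
    have h0 := hAC x' y' hx'0 hy'0
    have hΔφ : φ y' - φ x' = ∫ s in x'..y', φ' s := by rw [h0]; ring
    have habsΔ : |φ y' - φ x'| ≤ ∫ s in x'..y', |φ' s| := by
      rw [hΔφ]
      exact intervalIntegral.abs_integral_le_integral_abs hx'y'
    have hT1 : Kw x' ^ (β/2) * |φ y' - φ x'| ≤ ∫ s in x'..y', Kw s ^ (β/2) * |φ' s| := by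
      calc Kw x' ^ (β/2) * |φ y' - φ x'| ≤ Kw x' ^ (β/2) * ∫ s in x'..y', |φ' s| :=
            mul_le_mul_of_nonneg_left habsΔ (Kw_rpow_pos _ _).le
      _ = ∫ s in x'..y', Kw x' ^ (β/2) * |φ' s| :=
            (intervalIntegral.integral_const_mul _ _).symm
      _ ≤ ∫ s in x'..y', Kw s ^ (β/2) * |φ' s| := by
            apply intervalIntegral.integral_mono_on hx'y' (habs'.const_mul _) hr1'
            intro s hs
            exact mul_le_mul_of_nonneg_right
              (Kw_rpow_mono (by positivity) hx'0.le hs.1) (abs_nonneg _)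
    have hFTC : Kw y' ^ (β/2) - Kw x' ^ (β/2) = ∫ s in x'..y', β * s / 4 * Kw s ^ (β/2) := by
      rw [intervalIntegral.integral_eq_sub_of_hasDerivAt
        (f := fun s => Kw s ^ (β/2)) (fun s _ => by
          have := hasDerivAt_Kw (β/2) s
          exact this.congr_deriv (by ring)) ((hq.intervalIntegrable x' y'))]
    have hT2 : (Kw y' ^ (β/2) - Kw x' ^ (β/2)) * |φ y'| ≤
        (∫ s in x'..y', β * s / 4 * Kw s ^ (β/2) * |φ s|) +
          ε * ∫ s in x'..y', β * s / 4 * Kw s ^ (β/2) := by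
      rw [hFTC, ← intervalIntegral.integral_mul_const, ← intervalIntegral.integral_const_mul,
        ← intervalIntegral.integral_add hr2' ((hq.intervalIntegrable x' y').const_mul ε)]
      apply intervalIntegral.integral_mono_on hx'y'
        ((hq.intervalIntegrable x' y').mul_const _)
        (hr2'.add ((hq.intervalIntegrable x' y').const_mul ε))
      intro s hs
      have hs0 : 0 < s := lt_of_lt_of_le hx'0 hs.1
      have hq0 : 0 ≤ β * s / 4 * Kw s ^ (β/2) :=
        mul_nonneg (div_nonneg (mul_nonneg hβ.le hs0.le) (by norm_num)) (Kw_rpow_pos _ _).le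
      have hphi : |φ y'| ≤ |φ s| + ε := by
        have hd := hδprop s (hIccsub hs) y' (hIccsub ⟨hx'y', le_rfl⟩) (by
          rw [Real.dist_eq, abs_of_nonpos (by linarith [hs.2] : s - y' ≤ 0)]
          have : y' - s ≤ y' - x' := by linarith [hs.1]
          linarith)
        rw [Real.dist_eq] at hd
        calc |φ y'| ≤ |φ s| + |φ s - φ y'| := by
              have := abs_sub_abs_le_abs_sub (φ y') (φ s)
              rw [abs_sub_comm] at this
              linarith [abs_sub_comm (φ y') (φ s) ▸ this]
        _ ≤ |φ s| + ε := by linarith [hd.le]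
      calc β * s / 4 * Kw s ^ (β/2) * |φ y'| ≤ β * s / 4 * Kw s ^ (β/2) * (|φ s| + ε) :=
            mul_le_mul_of_nonneg_left hphi hq0
      _ = β * s / 4 * Kw s ^ (β/2) * |φ s| + ε * (β * s / 4 * Kw s ^ (β/2)) := by ring
    have hKmono : Kw x' ^ (β/2) ≤ Kw y' ^ (β/2) :=
      Kw_rpow_mono (by positivity) hx'0.le hx'y'
    have hdec : |Kw y' ^ (β/2) * φ y' - Kw x' ^ (β/2) * φ x'| ≤
        Kw x' ^ (β/2) * |φ y' - φ x'| + (Kw y' ^ (β/2) - Kw x' ^ (β/2)) * |φ y'| := by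
      have : Kw y' ^ (β/2) * φ y' - Kw x' ^ (β/2) * φ x'
          = Kw x' ^ (β/2) * (φ y' - φ x') + (Kw y' ^ (β/2) - Kw x' ^ (β/2)) * φ y' := by ring
      rw [this]
      refine (abs_add_le _ _).trans ?_
      rw [abs_mul, abs_mul, abs_of_pos (Kw_rpow_pos _ _),
        abs_of_nonneg (sub_nonneg.mpr hKmono)]
    have hsplit : (∫ s in x'..y', (Kw s ^ (β/2) * |φ' s| + β * s / 4 * Kw s ^ (β/2) * |φ s|))
        = (∫ s in x'..y', Kw s ^ (β/2) * |φ' s|)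
          + ∫ s in x'..y', β * s / 4 * Kw s ^ (β/2) * |φ s| :=
      intervalIntegral.integral_add hr1' hr2'
    have hslack : 0 ≤ ε * (y' - x') := mul_nonneg hε.le (by linarith)
    rw [hsplit]
    linarith


lemma phisq_aesm (hβ : 0 < β)
    (hAC : ∀ x y : ℝ, 0 < x → 0 < y → φ y = φ x + ∫ t in x..y, φ' t)
    (hInt : Integrable (fun η => ((φ η) ^ 2 + (φ' η) ^ 2) * (Kw η) ^ β)
      (volume.restrict (Ioi (0:ℝ)))) :
    AEStronglyMeasurable (fun t => φ t ^ 2) (volume.restrict (Ioi (0:ℝ))) := by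
  have hφ : AEStronglyMeasurable φ (volume.restrict (Ioi (0:ℝ))) :=
    (phi_cont β hβ φ φ' hAC hInt).aestronglyMeasurable measurableSet_Ioi
  exact (hφ.mul hφ).congr (Filter.Eventually.of_forall (fun t => (pow_two (φ t)).symm))


lemma hardy (hβ : 0 < β)
    (hAC : ∀ x y : ℝ, 0 < x → 0 < y → φ y = φ x + ∫ t in x..y, φ' t)
    (hInt : Integrable (fun η => ((φ η) ^ 2 + (φ' η) ^ 2) * (Kw η) ^ β)
      (volume.restrict (Ioi (0:ℝ)))) :
    IntegrableOn (fun t => t ^ 2 * φ t ^ 2 * Kw t ^ β) (Ioi (0:ℝ)) := by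
  set h : ℝ → ℝ := fun η => ((φ η) ^ 2 + (φ' η) ^ 2) * (Kw η) ^ β with hdefh
  have hh : IntegrableOn h (Ioi 0) := hInt
  have hh0 : ∀ t, 0 ≤ h t := fun t => by
    have h1 := (Kw_rpow_pos β t).le
    have h2 := sq_nonneg (φ t); have h3 := sq_nonneg (φ' t)
    simp only [hdefh]; positivity
  set C0 : ℝ := ∫ t in Ioi (0:ℝ), h t with hC0def
  have hC00 : 0 ≤ C0 := setIntegral_nonneg measurableSet_Ioi (fun t _ => hh0 t)
  have hφc : ContinuousOn φ (Ioi 0) := phi_cont β hβ φ φ' hAC hInt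
  have hφsq := phisq_aesm β φ φ' hβ hAC hInt
  have hWc : Continuous (fun t : ℝ => Kw t ^ β) := continuous_Kw_rpow β
  set u : ℝ → ℝ := fun t => φ t ^ 2 * (t * Kw t ^ β) with hudef
  have hu0 : ∀ t, 0 ≤ t → 0 ≤ u t := fun t ht => by
    have h1 := (Kw_rpow_pos β t).le
    have h2 := sq_nonneg (φ t)
    simp only [hudef]; positivity
  have hφWh : ∀ t, φ t ^ 2 * Kw t ^ β ≤ h t := fun t => by
    have h2 := sq_nonneg (φ' t)
    have h3 := (Kw_rpow_pos β t).le
    simp only [hdefh]; nlinarith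
  have hφ'Wh : ∀ t, φ' t ^ 2 * Kw t ^ β ≤ h t := fun t => by
    have h2 := sq_nonneg (φ t)
    have h3 := (Kw_rpow_pos β t).le
    simp only [hdefh]; nlinarith
  have hhsub : ∀ {x y : ℝ}, 0 ≤ x → IntegrableOn h (Ioc x y) := fun {x y} hx =>
    IntegrableOn.mono_set hh (fun s hs => lt_of_le_of_lt hx hs.1)
  have hφWint : ∀ {x y : ℝ}, 0 ≤ x → IntegrableOn (fun t => φ t ^ 2 * Kw t ^ β) (Ioc x y) := by
    intro x y hx
    have haesm : AEStronglyMeasurable (fun t => φ t ^ 2 * Kw t ^ β)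
        (volume.restrict (Ioc x y)) :=
      (aesm_sub (fun s hs => lt_of_le_of_lt hx hs.1) hφsq).mul hWc.aestronglyMeasurable
    refine Integrable.mono' (hhsub hx) haesm ?_
    filter_upwards [ae_restrict_mem measurableSet_Ioc] with t _
    rw [Real.norm_eq_abs,
      abs_of_nonneg (mul_nonneg (sq_nonneg _) (Kw_rpow_pos β t).le)]
    exact hφWh t
  have hf2int : ∀ {x y : ℝ}, 0 ≤ x → IntegrableOn (fun t => t ^ 2 * φ t ^ 2 * Kw t ^ β)
      (Ioc x y) := by
    intro x y hx
    rcases le_or_gt x y with hxy | hxy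
    · have haesm : AEStronglyMeasurable (fun t => t ^ 2 * φ t ^ 2 * Kw t ^ β)
          (volume.restrict (Ioc x y)) := by
        have h1 : AEStronglyMeasurable (fun t : ℝ => t ^ 2) (volume.restrict (Ioc x y)) :=
          (continuous_pow 2).aestronglyMeasurable
        exact (h1.mul (aesm_sub (fun s hs => lt_of_le_of_lt hx hs.1) hφsq)).mul
          hWc.aestronglyMeasurable
      refine Integrable.mono' ((hhsub hx).const_mul (y ^ 2)) haesm ?_
      filter_upwards [ae_restrict_mem measurableSet_Ioc] with t ht
      have ht0 : 0 < t := lt_of_le_of_lt hx ht.1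
      have h4 : t ^ 2 ≤ y ^ 2 := by nlinarith [ht.2]
      rw [Real.norm_eq_abs, abs_of_nonneg
        (mul_nonneg (mul_nonneg (sq_nonneg _) (sq_nonneg _)) (Kw_rpow_pos β t).le)]
      calc t ^ 2 * φ t ^ 2 * Kw t ^ β ≤ y ^ 2 * (φ t ^ 2 * Kw t ^ β) := by
            nlinarith [mul_nonneg (sq_nonneg (φ t)) (Kw_rpow_pos β t).le]
      _ ≤ y ^ 2 * h t := by nlinarith [hφWh t, sq_nonneg y]
    · rw [Ioc_eq_empty (by linarith)]
      exact integrableOn_empty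
  have huint : ∀ {x y : ℝ}, 0 ≤ x → IntegrableOn u (Ioc x y) := by
    intro x y hx
    rcases le_or_gt x y with hxy | hxy
    · have haesm : AEStronglyMeasurable u (volume.restrict (Ioc x y)) := by
        have h1 : AEStronglyMeasurable (fun t : ℝ => t * Kw t ^ β)
            (volume.restrict (Ioc x y)) := (continuous_id.mul hWc).aestronglyMeasurable
        exact (aesm_sub (fun s hs => lt_of_le_of_lt hx hs.1) hφsq).mul h1
      refine Integrable.mono' ((hhsub hx).const_mul y) haesm ?_
      filter_upwards [ae_restrict_mem measurableSet_Ioc] with t ht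
      have ht0 : 0 < t := lt_of_le_of_lt hx ht.1
      have hy0 : 0 < y := lt_of_lt_of_le ht0 ht.2
      rw [Real.norm_eq_abs, abs_of_nonneg (hu0 t ht0.le)]
      simp only [hudef]
      calc φ t ^ 2 * (t * Kw t ^ β) = t * (φ t ^ 2 * Kw t ^ β) := by ring
      _ ≤ y * (φ t ^ 2 * Kw t ^ β) :=
            mul_le_mul_of_nonneg_right ht.2 (mul_nonneg (sq_nonneg _) (Kw_rpow_pos β t).le)
      _ ≤ y * h t := mul_le_mul_of_nonneg_left (hφWh t) hy0.le
    · rw [Ioc_eq_empty (by linarith)]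
      exact integrableOn_empty
  have hIochC0 : ∀ {x y : ℝ}, 0 ≤ x → (∫ t in Ioc x y, h t) ≤ C0 := fun {x y} hx =>
    setIntegral_mono_set hh (Filter.Eventually.of_forall (fun t => hh0 t))
      (HasSubset.Subset.eventuallyLE (fun s hs => lt_of_le_of_lt hx hs.1))
  have hrOn : ∀ b : ℝ, 1 ≤ b →
      IntegrableOn (fun t => 2 * |φ t| * (t * Kw t ^ β) * |φ' t|) (Ioc 1 b) := by
    intro b hb
    have hsubI : Icc (1:ℝ) b ⊆ Ioi 0 := fun s hs => lt_of_lt_of_le one_pos hs.1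
    have hφcb : ContinuousOn φ (Icc 1 b) := hφc.mono hsubI
    obtain ⟨Mφ, hMφ⟩ := isCompact_Icc.exists_bound_of_continuousOn hφcb
    have hMφ0 : 0 ≤ Mφ := le_trans (norm_nonneg (φ 1)) (hMφ 1 ⟨le_rfl, hb⟩)
    refine mul_absphi'_intOn β φ φ' hβ hAC hInt (x := 1) (y := b) zero_le_one
      (fun t => 2 * |φ t| * (t * Kw t ^ β)) ?_ (2 * Mφ * (b * Kw b ^ β)) ?_
    · exact ((continuous_const.aestronglyMeasurable.mul
        ((hφc.mono (fun s hs => lt_of_lt_of_le one_pos hs.1.le)).abs.aestronglyMeasurable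
          measurableSet_Ioc)).mul ((continuous_id.mul hWc).aestronglyMeasurable))
    · intro t ht
      have ht0 : 0 < t := lt_of_lt_of_le one_pos ht.1.le
      have h1 : |φ t| ≤ Mφ := by
        have := hMφ t ⟨ht.1.le, ht.2⟩
        rwa [Real.norm_eq_abs] at this
      have h2 : t * Kw t ^ β ≤ b * Kw b ^ β :=
        mul_le_mul ht.2 (Kw_rpow_mono hβ.le ht0.le ht.2) (Kw_rpow_pos β t).le
          (by linarith)
      have h3 : 0 ≤ t * Kw t ^ β := mul_nonneg ht0.le (Kw_rpow_pos β t).le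
      have h4 : 0 ≤ b * Kw b ^ β := mul_nonneg (by linarith) (Kw_rpow_pos β b).le
      rw [abs_of_nonneg (mul_nonneg (by positivity) h3)]
      calc 2 * |φ t| * (t * Kw t ^ β) ≤ 2 * Mφ * (t * Kw t ^ β) := by
            nlinarith [abs_nonneg (φ t)]
      _ ≤ 2 * Mφ * (b * Kw b ^ β) := by nlinarith
  -- integration-by-parts style inequality via telescoping, on [1, b]
  have hIBP : ∀ b : ℝ, 1 ≤ b →
      (∫ t in Ioc 1 b, φ t ^ 2 * (Kw t ^ β * (1 + β * t ^ 2 / 2)))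
        ≤ u b + |u 1| + ∫ t in Ioc 1 b, 2 * |φ t| * (t * Kw t ^ β) * |φ' t| := by
    intro b hb
    have hsubI : Icc (1:ℝ) b ⊆ Ioi 0 := fun s hs => lt_of_lt_of_le one_pos hs.1
    have hφcb : ContinuousOn φ (Icc 1 b) := hφc.mono hsubI
    obtain ⟨Mφ, hMφ⟩ := isCompact_Icc.exists_bound_of_continuousOn hφcb
    have hMφ0 : 0 ≤ Mφ := le_trans (norm_nonneg (φ 1)) (hMφ 1 ⟨le_rfl, hb⟩)
    set cb : ℝ := b * Kw b ^ β with hcbdef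
    have hcb0 : 0 ≤ cb := mul_nonneg (by linarith) (Kw_rpow_pos β b).le
    set w : ℝ → ℝ := fun t => t * Kw t ^ β with hwdef
    set w' : ℝ → ℝ := fun t => Kw t ^ β * (1 + β * t ^ 2 / 2) with hw'def
    have hw'c : Continuous w' :=
      hWc.mul (continuous_const.add ((continuous_const.mul (continuous_pow 2)).div_const 2))
    have hw'0 : ∀ t, 0 ≤ t → 0 ≤ w' t := fun t ht => by
      have h1 := (Kw_rpow_pos β t).le
      have h2 := sq_nonneg t
      simp only [hw'def]; positivity
    have hwmono : ∀ {s t : ℝ}, 0 ≤ s → s ≤ t → w s ≤ w t := by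
      intro s t hs hst
      simp only [hwdef]
      exact mul_le_mul hst (Kw_rpow_mono hβ.le hs hst) (Kw_rpow_pos β s).le (by linarith)
    have hwFTC : ∀ {s t : ℝ}, s ≤ t → w t - w s = ∫ z in s..t, w' z := by
      intro s t hst
      rw [intervalIntegral.integral_eq_sub_of_hasDerivAt (f := w) (f' := w')
        (fun z _ => by
          have hd := (hasDerivAt_id z).mul (hasDerivAt_Kw β z)
          simp only [hwdef, hw'def]
          exact hd.congr_deriv (by simp only [id_eq]; ring)) (hw'c.intervalIntegrable s t)]
    have hvI : IntervalIntegrable (fun t => φ t ^ 2 * w' t) volume 1 b := by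
      apply ContinuousOn.intervalIntegrable
      rw [uIcc_of_le hb]
      have hsq : ContinuousOn (fun t => φ t ^ 2) (Icc 1 b) :=
        (hφcb.mul hφcb).congr (fun t _ => pow_two (φ t))
      exact hsq.mul hw'c.continuousOn
    have habsOn : IntegrableOn (fun t => |φ' t|) (Ioc 1 b) :=
      absphi'_intOn β φ φ' hβ hAC hInt zero_le_one
    have hrI : IntervalIntegrable (fun t => 2 * |φ t| * (t * Kw t ^ β) * |φ' t|) volume 1 b :=
      (intervalIntegrable_iff_integrableOn_Ioc_of_le hb).mpr (hrOn b hb)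
    have habsI : IntervalIntegrable (fun t => |φ' t|) volume 1 b :=
      (intervalIntegrable_iff_integrableOn_Ioc_of_le hb).mpr habsOn
    have hmI : IntervalIntegrable (fun t => w' t + cb * |φ' t|) volume 1 b :=
      (hw'c.intervalIntegrable 1 b).add (habsI.const_mul cb)
    have main := telescope_bound hb u (fun t => φ t ^ 2 * w' t)
        (fun t => 2 * |φ t| * (t * Kw t ^ β) * |φ' t|)
        (fun t => w' t + cb * |φ' t|)
        hvI hrI hmI
        (intervalIntegral.integral_nonneg hb (fun t ht =>
          add_nonneg (hw'0 t (by linarith [ht.1]))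
            (mul_nonneg hcb0 (abs_nonneg _)))) ?_
    · have h1 : ∫ t in (1:ℝ)..b, φ t ^ 2 * w' t = ∫ t in Ioc 1 b, φ t ^ 2 * w' t :=
        intervalIntegral.integral_of_le hb
      have h2 : ∫ t in (1:ℝ)..b, 2 * |φ t| * (t * Kw t ^ β) * |φ' t|
          = ∫ t in Ioc 1 b, 2 * |φ t| * (t * Kw t ^ β) * |φ' t| :=
        intervalIntegral.integral_of_le hb
      rw [h1, h2] at main
      have h3 := (abs_le.mp main).1
      have h5 := neg_abs_le (u 1)
      simp only [hw'def] at h3 ⊢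
      linarith
    · intro ε hε
      obtain ⟨δ₁, hδ₁, hδprop⟩ := (Metric.uniformContinuousOn_iff).mp
        (isCompact_Icc.uniformContinuousOn_of_continuous hφcb)
        (min (ε / 2) (ε / (2 * Mφ + 1))) (lt_min (by linarith) (by positivity))
      refine ⟨δ₁ / 2, by positivity, ?_⟩
      intro x' y' hxx' hx'y' hy'y hmesh
      have hx'0 : 0 < x' := lt_of_lt_of_le one_pos hxx'
      have hy'0 : 0 < y' := lt_of_lt_of_le hx'0 hx'y'
      have hIccsub : Icc x' y' ⊆ Icc 1 b := Icc_subset_Icc hxx' hy'y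
      have hsub2 : uIcc x' y' ⊆ uIcc 1 b := by
        rw [uIcc_of_le hx'y', uIcc_of_le hb]; exact hIccsub
      have hucont : ∀ s t, s ∈ Icc x' y' → t ∈ Icc x' y' →
          |φ s - φ t| ≤ min (ε / 2) (ε / (2 * Mφ + 1)) := by
        intro s t hs ht
        have hd := hδprop s (hIccsub hs) t (hIccsub ht) (by
          rw [Real.dist_eq]
          have h1 : |s - t| ≤ y' - x' := abs_le.mpr
            ⟨by rcases hs with ⟨a1, a2⟩; rcases ht with ⟨b1, b2⟩; linarith,
             by rcases hs with ⟨a1, a2⟩; rcases ht with ⟨b1, b2⟩; linarith⟩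
          linarith)
        rw [Real.dist_eq] at hd
        exact hd.le
      have hMbd : ∀ s, s ∈ Icc x' y' → |φ s| ≤ Mφ := fun s hs => by
        have := hMφ s (hIccsub hs)
        rwa [Real.norm_eq_abs] at this
      have hvI' : IntervalIntegrable (fun t => φ t ^ 2 * w' t) volume x' y' :=
        hvI.mono_set hsub2
      have hrI' : IntervalIntegrable (fun t => 2 * |φ t| * (t * Kw t ^ β) * |φ' t|)
          volume x' y' := hrI.mono_set hsub2
      have habsI' : IntervalIntegrable (fun t => |φ' t|) volume x' y' := habsI.mono_set hsub2
      have hw'I' : IntervalIntegrable w' volume x' y' := hw'c.intervalIntegrable x' y'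
      -- A term
      have hA : |φ y' ^ 2 * (w y' - w x') - ∫ t in x'..y', φ t ^ 2 * w' t|
          ≤ ε * ∫ t in x'..y', w' t := by
        rw [hwFTC hx'y', ← intervalIntegral.integral_const_mul,
          ← intervalIntegral.integral_sub (hw'I'.const_mul _) hvI',
          ← intervalIntegral.integral_const_mul]
        refine (intervalIntegral.abs_integral_le_integral_abs hx'y').trans ?_
        apply intervalIntegral.integral_mono_on hx'y'
          (((hw'I'.const_mul _).sub hvI').abs) (hw'I'.const_mul ε)
        intro s hs
        have hs0 : 0 < s := lt_of_lt_of_le hx'0 hs.1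
        have h2 : |φ y' ^ 2 - φ s ^ 2| ≤ ε := by
          have h3 := (hucont y' s ⟨hx'y', le_rfl⟩ hs).trans (min_le_right _ _)
          have h4 := hMbd y' ⟨hx'y', le_rfl⟩
          have h5 := hMbd s hs
          have h6 : |φ y' ^ 2 - φ s ^ 2| = |φ y' + φ s| * |φ y' - φ s| := by
            rw [← abs_mul]; congr 1; ring
          have h7 : |φ y' + φ s| ≤ 2 * Mφ + 1 := by
            have := abs_add_le (φ y') (φ s); linarith
          calc |φ y' ^ 2 - φ s ^ 2| = |φ y' + φ s| * |φ y' - φ s| := h6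
          _ ≤ (2 * Mφ + 1) * (ε / (2 * Mφ + 1)) :=
              mul_le_mul h7 h3 (abs_nonneg _) (by positivity)
          _ = ε := by field_simp
        have hwnn := hw'0 s hs0.le
        have hgoal : φ y' ^ 2 * w' s - φ s ^ 2 * w' s = (φ y' ^ 2 - φ s ^ 2) * w' s := by ring
        rw [hgoal, abs_mul, abs_of_nonneg hwnn]
        exact mul_le_mul_of_nonneg_right h2 hwnn
      -- B term
      have hB : |w x' * (φ y' ^ 2 - φ x' ^ 2)| ≤
          (∫ t in x'..y', 2 * |φ t| * (t * Kw t ^ β) * |φ' t|)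
            + ε * ∫ t in x'..y', cb * |φ' t| := by
        have hΔφ : φ y' - φ x' = ∫ s in x'..y', φ' s := by rw [hAC x' y' hx'0 hy'0]; ring
        have habsΔ : |φ y' - φ x'| ≤ ∫ s in x'..y', |φ' s| := by
          rw [hΔφ]; exact intervalIntegral.abs_integral_le_integral_abs hx'y'
        have hw0x' : 0 ≤ w x' := mul_nonneg hx'0.le (Kw_rpow_pos β x').le
        have hintnn : 0 ≤ ∫ s in x'..y', |φ' s| :=
          intervalIntegral.integral_nonneg hx'y' (fun s _ => abs_nonneg _)
        have step1 : |w x' * (φ y' ^ 2 - φ x' ^ 2)|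
            ≤ (w x' * (|φ y'| + |φ x'|)) * ∫ s in x'..y', |φ' s| := by
          rw [abs_mul, abs_of_nonneg hw0x']
          have h6 : |φ y' ^ 2 - φ x' ^ 2| = |φ y' + φ x'| * |φ y' - φ x'| := by
            rw [← abs_mul]; congr 1; ring
          have h7 : |φ y' + φ x'| ≤ |φ y'| + |φ x'| := abs_add_le _ _
          calc w x' * |φ y' ^ 2 - φ x' ^ 2| = w x' * (|φ y' + φ x'| * |φ y' - φ x'|) := by
                rw [h6]
          _ ≤ w x' * ((|φ y'| + |φ x'|) * ∫ s in x'..y', |φ' s|) := by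
              apply mul_le_mul_of_nonneg_left _ hw0x'
              exact mul_le_mul h7 habsΔ (abs_nonneg _)
                (add_nonneg (abs_nonneg _) (abs_nonneg _))
          _ = (w x' * (|φ y'| + |φ x'|)) * ∫ s in x'..y', |φ' s| := by ring
        rw [← intervalIntegral.integral_const_mul] at step1
        refine step1.trans ?_
        rw [← intervalIntegral.integral_const_mul,
          ← intervalIntegral.integral_add hrI' ((habsI'.const_mul cb).const_mul ε)]
        apply intervalIntegral.integral_mono_on hx'y' (habsI'.const_mul _)
          (hrI'.add ((habsI'.const_mul cb).const_mul ε))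
        intro s hs
        have hs0 : 0 < s := lt_of_lt_of_le hx'0 hs.1
        have h8 : |φ y'| ≤ |φ s| + ε / 2 := by
          have h3 := (hucont y' s ⟨hx'y', le_rfl⟩ hs).trans (min_le_left _ _)
          have := abs_sub_abs_le_abs_sub (φ y') (φ s)
          linarith
        have h9 : |φ x'| ≤ |φ s| + ε / 2 := by
          have h3 := (hucont x' s ⟨le_rfl, hx'y'⟩ hs).trans (min_le_left _ _)
          have := abs_sub_abs_le_abs_sub (φ x') (φ s)
          linarith
        have h10 : w x' ≤ w s := hwmono hx'0.le hs.1
        have h11 : w s ≤ cb := by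
          have := hwmono hs0.le ((hIccsub hs).2)
          simpa [hwdef, hcbdef] using this
        have hws0 : 0 ≤ w s := mul_nonneg hs0.le (Kw_rpow_pos β s).le
        have hw0x' : 0 ≤ w x' := mul_nonneg hx'0.le (Kw_rpow_pos β x').le
        have hsum0 : 0 ≤ |φ y'| + |φ x'| := add_nonneg (abs_nonneg _) (abs_nonneg _)
        have hA1 : w x' * (|φ y'| + |φ x'|) ≤ 2 * |φ s| * w s + ε * cb := by
          calc w x' * (|φ y'| + |φ x'|) ≤ w s * (|φ y'| + |φ x'|) :=
                mul_le_mul_of_nonneg_right h10 hsum0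
          _ ≤ w s * (2 * |φ s| + ε) := mul_le_mul_of_nonneg_left (by linarith) hws0
          _ = 2 * |φ s| * w s + ε * w s := by ring
          _ ≤ 2 * |φ s| * w s + ε * cb := by nlinarith
        calc w x' * (|φ y'| + |φ x'|) * |φ' s|
            ≤ (2 * |φ s| * w s + ε * cb) * |φ' s| :=
              mul_le_mul_of_nonneg_right hA1 (abs_nonneg _)
        _ = 2 * |φ s| * (s * Kw s ^ β) * |φ' s| + ε * (cb * |φ' s|) := by
              simp only [hwdef]; ring
      -- assemble the local estimate
      have hdecomp : u y' - u x' - ∫ t in x'..y', φ t ^ 2 * w' t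
          = (φ y' ^ 2 * (w y' - w x') - ∫ t in x'..y', φ t ^ 2 * w' t)
            + w x' * (φ y' ^ 2 - φ x' ^ 2) := by
        simp only [hudef, hwdef]; ring
      rw [hdecomp]
      refine (abs_add_le _ _).trans ?_
      have hm_split : ∫ t in x'..y', (w' t + cb * |φ' t|)
          = (∫ t in x'..y', w' t) + ∫ t in x'..y', cb * |φ' t| :=
        intervalIntegral.integral_add hw'I' (habsI'.const_mul cb)
      have hslack : 0 ≤ ε * (y' - x') := mul_nonneg hε.le (by linarith)
      rw [hm_split, mul_add]
      linarith
  -- Step 2: uniform bound for the truncated weighted integrals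
  have hX : ∀ b : ℝ, 1 ≤ b → (∫ t in Ioc 1 b, t ^ 2 * φ t ^ 2 * Kw t ^ β)
      ≤ 4 / β * (u b + |u 1|) + 16 * C0 / β ^ 2 := by
    intro b hb
    have hβ' : β ≠ 0 := ne_of_gt hβ
    set X := ∫ t in Ioc 1 b, t ^ 2 * φ t ^ 2 * Kw t ^ β with hXdef
    have hvOn : IntegrableOn (fun t => φ t ^ 2 * (Kw t ^ β * (1 + β * t ^ 2 / 2)))
        (Ioc 1 b) := by
      rcases le_or_gt 1 b with hb1 | hb1
      · apply (ContinuousOn.integrableOn_Icc ?_).mono_set Ioc_subset_Icc_self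
        have hφcb : ContinuousOn φ (Icc 1 b) :=
          hφc.mono (fun s hs => lt_of_lt_of_le one_pos hs.1)
        exact ((hφcb.mul hφcb).congr (fun t _ => pow_two (φ t))).mul
          (hWc.mul (continuous_const.add
            ((continuous_const.mul (continuous_pow 2)).div_const 2))).continuousOn
      · rw [Ioc_eq_empty (by linarith)]; exact integrableOn_empty
    have s1 : X ≤ 2 / β * ∫ t in Ioc 1 b, φ t ^ 2 * (Kw t ^ β * (1 + β * t ^ 2 / 2)) := by
      rw [← integral_const_mul]
      apply setIntegral_mono_on (hf2int zero_le_one) (hvOn.const_mul _) measurableSet_Ioc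
      intro t ht
      have hW := (Kw_rpow_pos β t).le
      have hphi2 := sq_nonneg (φ t)
      have hkey : 2 / β * (φ t ^ 2 * (Kw t ^ β * (1 + β * t ^ 2 / 2)))
          = 2 / β * (φ t ^ 2 * Kw t ^ β) + t ^ 2 * φ t ^ 2 * Kw t ^ β := by
        field_simp
      rw [hkey]
      have : 0 ≤ 2 / β * (φ t ^ 2 * Kw t ^ β) := by positivity
      linarith
    have s2 : (∫ t in Ioc 1 b, 2 * |φ t| * (t * Kw t ^ β) * |φ' t|)
        ≤ β / 4 * X + 4 / β * C0 := by
      rcases le_or_gt 1 b with hb1 | hb1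
      · have hpt : ∀ t ∈ Ioc (1:ℝ) b, 2 * |φ t| * (t * Kw t ^ β) * |φ' t|
            ≤ β / 4 * (t ^ 2 * φ t ^ 2 * Kw t ^ β) + 4 / β * h t := by
          intro t ht
          have ht0 : 0 < t := lt_of_lt_of_le one_pos ht.1.le
          have hW := (Kw_rpow_pos β t).le
          have base : 2 * (t * |φ t|) * |φ' t|
              ≤ β / 4 * (t * |φ t|) ^ 2 + 4 / β * |φ' t| ^ 2 := by
            have hexp : (4 * β) * (β / 4 * (t * |φ t|) ^ 2 + 4 / β * |φ' t| ^ 2)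
                = β ^ 2 * (t * |φ t|) ^ 2 + 16 * |φ' t| ^ 2 := by
              field_simp; ring
            rw [← mul_le_mul_iff_right₀ (by linarith : (0:ℝ) < 4 * β), hexp]
            nlinarith [sq_nonneg (β * (t * |φ t|) - 4 * |φ' t|)]
          have base2 : 2 * (t * |φ t|) * |φ' t| * Kw t ^ β
              ≤ (β / 4 * (t * |φ t|) ^ 2 + 4 / β * |φ' t| ^ 2) * Kw t ^ β :=
            mul_le_mul_of_nonneg_right base hW
          have hid1 : (t * |φ t|) ^ 2 = t ^ 2 * φ t ^ 2 := by rw [mul_pow, sq_abs]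
          have hid2 : |φ' t| ^ 2 = φ' t ^ 2 := sq_abs _
          have h4β : (0:ℝ) ≤ 4 / β := by positivity
          calc 2 * |φ t| * (t * Kw t ^ β) * |φ' t|
              = 2 * (t * |φ t|) * |φ' t| * Kw t ^ β := by ring
          _ ≤ (β / 4 * (t * |φ t|) ^ 2 + 4 / β * |φ' t| ^ 2) * Kw t ^ β := base2
          _ = β / 4 * (t ^ 2 * φ t ^ 2 * Kw t ^ β) + 4 / β * (φ' t ^ 2 * Kw t ^ β) := by
              rw [hid1, hid2]; ring
          _ ≤ β / 4 * (t ^ 2 * φ t ^ 2 * Kw t ^ β) + 4 / β * h t := by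
              have := mul_le_mul_of_nonneg_left (hφ'Wh t) h4β
              linarith
        have hi1 : IntegrableOn (fun t => β / 4 * (t ^ 2 * φ t ^ 2 * Kw t ^ β)) (Ioc 1 b) :=
          (hf2int (x := 1) (y := b) zero_le_one).const_mul (β / 4)
        have hi2 : IntegrableOn (fun t => 4 / β * h t) (Ioc 1 b) :=
          (hhsub (x := 1) (y := b) zero_le_one).const_mul (4 / β)
        have hi12 : IntegrableOn (fun t => β / 4 * (t ^ 2 * φ t ^ 2 * Kw t ^ β) + 4 / β * h t)
            (Ioc 1 b) := hi1.add hi2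
        calc (∫ t in Ioc 1 b, 2 * |φ t| * (t * Kw t ^ β) * |φ' t|)
            ≤ ∫ t in Ioc 1 b, (β / 4 * (t ^ 2 * φ t ^ 2 * Kw t ^ β) + 4 / β * h t) :=
              setIntegral_mono_on (hrOn b hb1) hi12 measurableSet_Ioc hpt
        _ = β / 4 * X + 4 / β * ∫ t in Ioc 1 b, h t := by
              rw [integral_add hi1 hi2, integral_const_mul, integral_const_mul]
        _ ≤ β / 4 * X + 4 / β * C0 := by
              have h4β : (0:ℝ) ≤ 4 / β := by positivity
              have := mul_le_mul_of_nonneg_left (hIochC0 (x := 1) (y := b) zero_le_one) h4β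
              linarith
      · exfalso; linarith
    have hIBPb := hIBP b hb
    have h2β : (0:ℝ) ≤ 2 / β := by positivity
    have t1 : X ≤ 2 / β * (u b + |u 1| + (β / 4 * X + 4 / β * C0)) := by
      refine s1.trans ?_
      apply mul_le_mul_of_nonneg_left _ h2β
      linarith
    have hexp2 : 2 / β * (u b + |u 1| + (β / 4 * X + 4 / β * C0))
        = 2 / β * (u b + |u 1|) + 1 / 2 * X + 8 * C0 / β ^ 2 := by
      field_simp; ring
    rw [hexp2] at t1
    have he1 : 4 / β * (u b + |u 1|) = 2 * (2 / β * (u b + |u 1|)) := by ring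
    have he2 : 16 * C0 / β ^ 2 = 2 * (8 * C0 / β ^ 2) := by ring
    linarith
  -- Step 3: good points
  have hgood : ∀ n : ℕ, ∃ bn : ℝ, bn ∈ Ioc ((n:ℝ) + 1) (2 * ((n:ℝ) + 1))
      ∧ u bn ≤ 2 * C0 + 1 := by
    intro n
    by_contra hcon
    push_neg at hcon
    set a : ℝ := (n:ℝ) + 1 with hadef
    have ha1 : 1 ≤ a := by
      simp only [hadef]
      have : (0:ℝ) ≤ (n:ℝ) := Nat.cast_nonneg n
      linarith
    have ha0 : (0:ℝ) < a := by linarith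
    have hconst : IntegrableOn (fun _ : ℝ => 2 * C0 + 1) (Ioc a (2 * a)) :=
      integrableOn_const (by rw [Real.volume_Ioc]; exact ENNReal.ofReal_ne_top)
    have hmono1 := setIntegral_mono_on hconst (huint ha0.le) measurableSet_Ioc
      (fun t ht => (hcon t ht).le)
    rw [setIntegral_const, smul_eq_mul, measureReal_def, Real.volume_Ioc,
      ENNReal.toReal_ofReal (by linarith)] at hmono1
    have hup : ∫ t in Ioc a (2 * a), u t ≤ 2 * a * C0 := by
      have hstep : ∫ t in Ioc a (2 * a), u t
          ≤ ∫ t in Ioc a (2 * a), 2 * a * (φ t ^ 2 * Kw t ^ β) := by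
        apply setIntegral_mono_on (huint ha0.le) ((hφWint ha0.le).const_mul _)
          measurableSet_Ioc
        intro t ht
        have hnn := mul_nonneg (sq_nonneg (φ t)) (Kw_rpow_pos β t).le
        simp only [hudef]
        calc φ t ^ 2 * (t * Kw t ^ β) = t * (φ t ^ 2 * Kw t ^ β) := by ring
        _ ≤ 2 * a * (φ t ^ 2 * Kw t ^ β) := mul_le_mul_of_nonneg_right ht.2 hnn
      rw [integral_const_mul] at hstep
      refine hstep.trans ?_
      apply mul_le_mul_of_nonneg_left _ (by linarith : (0:ℝ) ≤ 2 * a)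
      calc ∫ t in Ioc a (2 * a), φ t ^ 2 * Kw t ^ β ≤ ∫ t in Ioc a (2 * a), h t :=
            setIntegral_mono_on (hφWint ha0.le) (hhsub ha0.le) measurableSet_Ioc
              (fun t _ => hφWh t)
      _ ≤ C0 := hIochC0 ha0.le
    have harith : (2 * a - a) * (2 * C0 + 1) ≤ 2 * a * C0 := le_trans hmono1 hup
    nlinarith
  -- Step 4: tail integrability
  choose bfun hbmem hbu using hgood
  have hb1 : ∀ n, 1 ≤ bfun n := fun n => by
    have h1 := (hbmem n).1
    have : (0:ℝ) ≤ (n:ℝ) := Nat.cast_nonneg n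
    linarith
  have htend : Filter.Tendsto bfun Filter.atTop Filter.atTop := by
    apply Filter.tendsto_atTop_mono (fun n => ?_) tendsto_natCast_atTop_atTop
    have h1 := (hbmem n).1
    linarith
  set Xmax : ℝ := 4 / β * ((2 * C0 + 1) + |u 1|) + 16 * C0 / β ^ 2 with hXmaxdef
  have hXb : ∀ n : ℕ, (∫ t in (1:ℝ)..(bfun n), ‖t ^ 2 * φ t ^ 2 * Kw t ^ β‖) ≤ Xmax := by
    intro n
    have hb := hb1 n
    have hnorm : ∀ t : ℝ, ‖t ^ 2 * φ t ^ 2 * Kw t ^ β‖ = t ^ 2 * φ t ^ 2 * Kw t ^ β := by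
      intro t
      rw [Real.norm_eq_abs, abs_of_nonneg
        (mul_nonneg (mul_nonneg (sq_nonneg _) (sq_nonneg _)) (Kw_rpow_pos β t).le)]
    simp_rw [hnorm]
    rw [intervalIntegral.integral_of_le hb]
    refine (hX (bfun n) hb).trans ?_
    have hub := hbu n
    have h4β : (0:ℝ) ≤ 4 / β := by positivity
    simp only [hXmaxdef]
    nlinarith
  have htail : IntegrableOn (fun t => t ^ 2 * φ t ^ 2 * Kw t ^ β) (Ioi 1) :=
    integrableOn_Ioi_of_intervalIntegral_norm_bounded Xmax 1
      (fun n => hf2int zero_le_one) htend (Filter.Eventually.of_forall hXb)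
  have hhead : IntegrableOn (fun t => t ^ 2 * φ t ^ 2 * Kw t ^ β) (Ioc 0 1) :=
    hf2int le_rfl
  have hunion := hhead.union htail
  rwa [Ioc_union_Ioi_eq_Ioi zero_le_one] at hunion
end

/-- If `φ` (with distributional derivative `φ'`) satisfies
`∫₀^∞ (φ² + φ'²) K^β dη < ∞`, then `K^{β/2} φ` has a representative which is
Hölder continuous of exponent `1/2` on `[0,∞)`. -/
theorem holder_embedding_weighted (β : ℝ) (hβ : 0 < β) (φ φ' : ℝ → ℝ)
    (hAC : ∀ x y : ℝ, 0 < x → 0 < y → φ y = φ x + ∫ t in x..y, φ' t)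
    (hInt : Integrable (fun η => ((φ η) ^ 2 + (φ' η) ^ 2) * (Kw η) ^ β)
      (volume.restrict (Ioi (0:ℝ)))) :
    ∃ f : ℝ → ℝ,
      (∀ᵐ η ∂(volume.restrict (Ioi (0:ℝ))), f η = (Kw η) ^ (β / 2) * φ η) ∧
      ∃ L : ℝ, 0 ≤ L ∧ ∀ x y : ℝ, 0 ≤ x → 0 ≤ y →
        |f x - f y| ≤ L * |x - y| ^ ((1:ℝ) / 2) := by
  have hφc : ContinuousOn φ (Ioi 0) := phi_cont β hβ φ φ' hAC hInt
  set ψ : ℝ → ℝ := fun t => Kw t ^ (β / 2) * φ t with hψdef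
  set g : ℝ → ℝ := fun t => Kw t ^ (β / 2) * |φ' t| + β * t / 4 * Kw t ^ (β / 2) * |φ t|
    with hgdef
  have hg0 : ∀ t, 0 < t → 0 ≤ g t := by
    intro t ht
    simp only [hgdef]
    have h1 := (Kw_rpow_pos (β / 2) t).le
    have h2 := abs_nonneg (φ' t); have h3 := abs_nonneg (φ t)
    have h4 : 0 ≤ β * t / 4 := by positivity
    positivity
  have hsqK : ∀ t, (Kw t ^ (β / 2)) ^ 2 = Kw t ^ β := by
    intro t
    rw [Kw_rpow, Kw_rpow, pow_two, ← Real.exp_add]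
    congr 1; ring
  -- g² is integrable on (0, ∞)
  have hg2 : IntegrableOn (fun t => g t ^ 2) (Ioi (0:ℝ)) := by
    have hgaesm : AEStronglyMeasurable g (volume.restrict (Ioi (0:ℝ))) := by
      have h1 : AEStronglyMeasurable (fun t => Kw t ^ (β / 2) * |φ' t|)
          (volume.restrict (Ioi (0:ℝ))) :=
        (continuous_Kw_rpow (β / 2)).aestronglyMeasurable.mul
          (absphi'_aesm β φ φ' hβ hAC hInt)
      have h2 : AEStronglyMeasurable (fun t => β * t / 4 * Kw t ^ (β / 2) * |φ t|)
          (volume.restrict (Ioi (0:ℝ))) :=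
        (((continuous_const.mul continuous_id).div_const 4).mul
          (continuous_Kw_rpow (β / 2))).aestronglyMeasurable.mul
          ((hφc.abs.aestronglyMeasurable measurableSet_Ioi))
      exact h1.add h2
    have hdom : IntegrableOn
        (fun t => 2 * (((φ t) ^ 2 + (φ' t) ^ 2) * (Kw t) ^ β)
          + β ^ 2 / 8 * (t ^ 2 * φ t ^ 2 * Kw t ^ β)) (Ioi (0:ℝ)) :=
      (hInt.const_mul 2).add ((hardy β φ φ' hβ hAC hInt).const_mul (β ^ 2 / 8))
    refine Integrable.mono' hdom (hgaesm.mul hgaesm |>.congr ?_) ?_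
    · filter_upwards with t using (pow_two (g t)).symm
    · filter_upwards [ae_restrict_mem measurableSet_Ioi] with t ht
      rw [mem_Ioi] at ht
      rw [Real.norm_eq_abs, abs_of_nonneg (sq_nonneg _)]
      simp only [hgdef]
      have hA : (Kw t ^ (β / 2) * |φ' t|) ^ 2 = φ' t ^ 2 * Kw t ^ β := by
        rw [mul_pow, hsqK, sq_abs]; ring
      have hB : (β * t / 4 * Kw t ^ (β / 2) * |φ t|) ^ 2
          = β ^ 2 / 16 * (t ^ 2 * φ t ^ 2 * Kw t ^ β) := by
        rw [mul_pow, mul_pow, hsqK, sq_abs]; ring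
      have hsum := sq_nonneg (Kw t ^ (β / 2) * |φ' t| - β * t / 4 * Kw t ^ (β / 2) * |φ t|)
      have hKW := (Kw_rpow_pos β t).le
      have hφ2 := mul_nonneg (sq_nonneg (φ t)) hKW
      nlinarith [sq_nonneg (φ t), sq_nonneg t, mul_nonneg (mul_nonneg (sq_nonneg t) (sq_nonneg (φ t))) hKW]
  set A : ℝ := Real.sqrt (∫ t in Ioi (0:ℝ), g t ^ 2) with hAdef
  have hA0 : 0 ≤ A := Real.sqrt_nonneg _
  -- the key Hölder estimate on (0, ∞)
  have hkey : ∀ x y : ℝ, 0 < x → x ≤ y → |ψ y - ψ x| ≤ A * Real.sqrt (y - x) := by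
    intro x y hx hxy
    have hsub : Ioc x y ⊆ Ioi 0 := fun s hs => lt_of_lt_of_le hx hs.1.le
    have h1 := holder_loc β φ φ' hβ hAC hInt hx hxy
    have h2 : (∫ t in Ioc x y, g t) ≤ Real.sqrt (y - x) * Real.sqrt (∫ t in Ioc x y, g t ^ 2) :=
      integral_le_sqrt_mul_sqrt hxy g (fun t ht => hg0 t (hsub ht)) (hg2.mono_set hsub)
        (aesm_sub hsub (by
          have h1' : AEStronglyMeasurable (fun t => Kw t ^ (β / 2) * |φ' t|)
              (volume.restrict (Ioi (0:ℝ))) :=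
            (continuous_Kw_rpow (β / 2)).aestronglyMeasurable.mul
              (absphi'_aesm β φ φ' hβ hAC hInt)
          have h2' : AEStronglyMeasurable (fun t => β * t / 4 * Kw t ^ (β / 2) * |φ t|)
              (volume.restrict (Ioi (0:ℝ))) :=
            (((continuous_const.mul continuous_id).div_const 4).mul
              (continuous_Kw_rpow (β / 2))).aestronglyMeasurable.mul
              ((hφc.abs.aestronglyMeasurable measurableSet_Ioi))
          exact h1'.add h2'))
    have h3 : (∫ t in Ioc x y, g t ^ 2) ≤ ∫ t in Ioi (0:ℝ), g t ^ 2 :=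
      setIntegral_mono_set hg2 (Filter.Eventually.of_forall (fun t => sq_nonneg _))
        (HasSubset.Subset.eventuallyLE hsub)
    have h4 : Real.sqrt (∫ t in Ioc x y, g t ^ 2) ≤ A := by
      rw [hAdef]; exact Real.sqrt_le_sqrt h3
    calc |ψ y - ψ x| ≤ ∫ t in Ioc x y, g t := h1
    _ ≤ Real.sqrt (y - x) * Real.sqrt (∫ t in Ioc x y, g t ^ 2) := h2
    _ ≤ Real.sqrt (y - x) * A :=
        mul_le_mul_of_nonneg_left h4 (Real.sqrt_nonneg _)
    _ = A * Real.sqrt (y - x) := mul_comm _ _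
  -- limit of ψ at 0⁺ along 1/(n+1)
  set s : ℕ → ℝ := fun n => ψ (1 / ((n:ℝ) + 1)) with hsdef
  have hinv_pos : ∀ n : ℕ, 0 < 1 / ((n:ℝ) + 1) := fun n => by positivity
  have hinv_mono : ∀ {m n : ℕ}, m ≤ n → 1 / ((n:ℝ) + 1) ≤ 1 / ((m:ℝ) + 1) := by
    intro m n hmn
    apply one_div_le_one_div_of_le (by positivity)
    have : (m:ℝ) ≤ (n:ℝ) := Nat.cast_le.mpr hmn
    linarith
  have hdistb : ∀ N n m : ℕ, N ≤ n → N ≤ m →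
      dist (s n) (s m) ≤ A * Real.sqrt (1 / ((N:ℝ) + 1)) := by
    have key : ∀ n m : ℕ, m ≤ n → ∀ N : ℕ, N ≤ m →
        dist (s n) (s m) ≤ A * Real.sqrt (1 / ((N:ℝ) + 1)) := by
      intro n m hmn N hNm
      have hx := hinv_pos n
      have hxy := hinv_mono hmn
      have h1 := hkey _ _ hx hxy
      rw [Real.dist_eq]
      have h2 : 1 / ((m:ℝ) + 1) - 1 / ((n:ℝ) + 1) ≤ 1 / ((N:ℝ) + 1) := by
        have := hinv_mono hNm
        have := (hinv_pos n).le
        linarith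
      have h3 : Real.sqrt (1 / ((m:ℝ) + 1) - 1 / ((n:ℝ) + 1))
          ≤ Real.sqrt (1 / ((N:ℝ) + 1)) := Real.sqrt_le_sqrt h2
      have h4 := mul_le_mul_of_nonneg_left h3 hA0
      calc |s n - s m| = |ψ (1 / ((m:ℝ) + 1)) - ψ (1 / ((n:ℝ) + 1))| := by
            rw [abs_sub_comm]
      _ ≤ A * Real.sqrt (1 / ((m:ℝ) + 1) - 1 / ((n:ℝ) + 1)) := h1
      _ ≤ A * Real.sqrt (1 / ((N:ℝ) + 1)) := h4
    intro N n m hNn hNm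
    rcases le_total m n with hmn | hnm
    · exact key n m hmn N hNm
    · rw [dist_comm]; exact key m n hnm N hNn
  have hb0 : Filter.Tendsto (fun N : ℕ => A * Real.sqrt (1 / ((N:ℝ) + 1)))
      Filter.atTop (nhds 0) := by
    have h1 : Filter.Tendsto (fun N : ℕ => 1 / ((N:ℝ) + 1)) Filter.atTop (nhds 0) :=
      tendsto_one_div_add_atTop_nhds_zero_nat
    have h2 := (Real.continuous_sqrt.tendsto 0).comp h1
    rw [Real.sqrt_zero] at h2
    have h3 := h2.const_mul A
    rwa [mul_zero] at h3
  have hcauchy : CauchySeq s := cauchySeq_of_le_tendsto_0 _ (fun n m N hn hm => hdistb N n m hn hm) hb0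
  obtain ⟨c₀, hc₀⟩ := cauchySeq_tendsto_of_complete hcauchy
  -- the representative
  refine ⟨fun x => if x ≤ 0 then c₀ else ψ x, ?_, A, hA0, ?_⟩
  · filter_upwards [self_mem_ae_restrict measurableSet_Ioi] with η hη
    rw [mem_Ioi] at hη
    rw [if_neg (not_le.mpr hη)]
  · -- Hölder continuity
    have hmain : ∀ x y : ℝ, 0 ≤ x → x ≤ y →
        |(if x ≤ 0 then c₀ else ψ x) - (if y ≤ 0 then c₀ else ψ y)|
          ≤ A * Real.sqrt (y - x) := by
      intro x y hx hxy
      rcases eq_or_lt_of_le hx with hx0 | hx0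
      · -- x = 0
        rcases eq_or_lt_of_le (hx0 ▸ hxy : (0:ℝ) ≤ y) with hy0 | hy0
        · rw [← hx0, ← hy0]
          simp
        · rw [← hx0, if_pos le_rfl, if_neg (not_le.mpr hy0)]
          have htend : Filter.Tendsto (fun n => |s n - ψ y|) Filter.atTop
              (nhds (|c₀ - ψ y|)) := (hc₀.sub tendsto_const_nhds).abs
          have h1 : Filter.Tendsto (fun n : ℕ => 1 / ((n:ℝ) + 1)) Filter.atTop (nhds 0) :=
            tendsto_one_div_add_atTop_nhds_zero_nat
          have hev : ∀ᶠ n : ℕ in Filter.atTop, 1 / ((n:ℝ) + 1) < y :=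
            h1.eventually (gt_mem_nhds hy0)
          have hbound : ∀ᶠ n : ℕ in Filter.atTop, |s n - ψ y| ≤ A * Real.sqrt (y - 0) := by
            filter_upwards [hev] with n hn
            have hx' := hinv_pos n
            have h2 := hkey _ _ hx' hn.le
            have h3 : Real.sqrt (y - 1 / ((n:ℝ) + 1)) ≤ Real.sqrt (y - 0) :=
              Real.sqrt_le_sqrt (by linarith)
            calc |s n - ψ y| = |ψ y - ψ (1 / ((n:ℝ) + 1))| := abs_sub_comm _ _
            _ ≤ A * Real.sqrt (y - 1 / ((n:ℝ) + 1)) := h2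
            _ ≤ A * Real.sqrt (y - 0) := mul_le_mul_of_nonneg_left h3 hA0
          exact le_of_tendsto htend hbound
      · -- 0 < x
        have hy0 : 0 < y := lt_of_lt_of_le hx0 hxy
        rw [if_neg (not_le.mpr hx0), if_neg (not_le.mpr hy0)]
        calc |ψ x - ψ y| = |ψ y - ψ x| := abs_sub_comm _ _
        _ ≤ A * Real.sqrt (y - x) := hkey x y hx0 hxy
    intro x y hx hy
    rw [show |x - y| ^ ((1:ℝ) / 2) = Real.sqrt |x - y| from (Real.sqrt_eq_rpow _).symm]
    rcases le_total x y with hxy | hyx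
    · have habs : |x - y| = y - x := by
        rw [abs_sub_comm, abs_of_nonneg (by linarith)]
      rw [habs]
      exact hmain x y hx hxy
    · have habs : |x - y| = x - y := abs_of_nonneg (by linarith)
      rw [habs, abs_sub_comm]
      exact hmain y x hy hyx
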